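/- For any fixed positive integer s, the number f_s(r) of s-bad pairs of binary vectors of length r satisfies f_s(r)/4^r → 0 as r → ∞; equivalently, the proportion of pairs of binary vectors of length r that are s-bad tends to zero. -/

import Mathlib

/-- The length-`s` window of a binary vector `x` of length `r`, starting at position `i`. -/
def window {r : ℕ} (s : ℕ) (x : Fin r → Fin 2) (i : ℕ) (hi : i + s ≤ r) : Fin s → Fin 2 :=
  fun t => x ⟨i + t, by omega⟩

/-- The standard basis vector `e_h` of length `s` (1-indexed position `h`). -/
def eVec (s h : ℕ) : Fin s → Fin 2 :=
  fun t => if (t : ℕ) = h - 1 then 1 else 0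

/-- A pair `(x, y)` of binary vectors of length `r` is `s`-good. -/
def sGood (r s : ℕ) (x y : Fin r → Fin 2) : Prop :=
  ∀ h, 1 ≤ h → h ≤ s →
    ∃ (i j : ℕ) (hi : i + s ≤ r) (hj : j + s ≤ r),
      window s x i hi = eVec s h ∧ window s x j hj = (fun _ => 0) ∧
      window s y i hi = (fun _ => 0) ∧ window s y j hj = eVec s h

lemma block_lt {s m r : ℕ} (hms : m * s ≤ r) {k : ℕ} (hk : k < m) (t : Fin s) :
    k * s + (t : ℕ) < r := by
  have h1 : (k + 1) * s ≤ m * s := Nat.mul_le_mul_right s hk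
  rw [add_mul, one_mul] at h1
  have := t.2; omega

lemma count_avoid (α : Type) [Fintype α] [DecidableEq α] (s m r : ℕ) (hs : 0 < s) (hms : m * s ≤ r)
    (p : Fin s → α) :
    Nat.card {z : Fin r → α // ∀ k (hk : k < m),
        (fun t : Fin s => z ⟨k * s + t, block_lt hms hk t⟩) ≠ p} ≤
      (Fintype.card α ^ s - 1) ^ m * Fintype.card α ^ (r - m * s) := by
  set Φ : {z : Fin r → α // ∀ k (hk : k < m),
        (fun t : Fin s => z ⟨k * s + t, block_lt hms hk t⟩) ≠ p} →
      (Fin m → {q : Fin s → α // q ≠ p}) × (Fin (r - m * s) → α) :=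
    fun z => (fun k => ⟨fun t => z.1 ⟨k * s + t, block_lt hms k.2 t⟩, z.2 k k.2⟩,
      fun j => z.1 ⟨m * s + j, by have := j.2; omega⟩) with hΦ
  have hinj : Function.Injective Φ := by
    intro z w h
    obtain ⟨h1, h2⟩ := Prod.mk.injEq .. ▸ h
    ext ⟨i, hi⟩
    by_cases hc : i < m * s
    · have hks : i / s < m := by
        rcases Nat.lt_or_ge (i / s) m with h' | h'
        · exact h'
        · exact absurd (Nat.le_trans (Nat.mul_le_mul_right s h') (Nat.div_mul_le_self i s)) (by omega)
      have := congrFun (Subtype.mk.injEq .. ▸ congrFun h1 ⟨i / s, hks⟩) ⟨i % s, Nat.mod_lt _ hs⟩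
      simpa [Nat.div_add_mod'] using this
    · have := congrFun h2 ⟨i - m * s, by omega⟩
      simpa [Nat.add_sub_cancel' (Nat.le_of_not_lt hc)] using this
  have hcard : Fintype.card {q : Fin s → α // q ≠ p} = Fintype.card α ^ s - 1 := by
    have := Fintype.card_subtype_compl (fun q : Fin s → α => q = p)
    simpa [Fintype.card_subtype_eq, Ne] using this
  calc Nat.card _ ≤ Nat.card ((Fin m → {q : Fin s → α // q ≠ p}) × (Fin (r - m * s) → α)) :=
        Nat.card_le_card_of_injective Φ hinj
    _ = (Fintype.card α ^ s - 1) ^ m * Fintype.card α ^ (r - m * s) := by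
        simp [Nat.card_eq_fintype_card, hcard, Fintype.card_fun]

/-- The set of pairs none of whose windows matches the pattern pair `(a, b)`. -/
def Fset (r s : ℕ) (a b : Fin s → Fin 2) : Set ((Fin r → Fin 2) × (Fin r → Fin 2)) :=
  {pq | ∀ i (hi : i + s ≤ r), ¬(window s pq.1 i hi = a ∧ window s pq.2 i hi = b)}

lemma Fset_card (r s : ℕ) (hs : 0 < s) (a b : Fin s → Fin 2) :
    (Fset r s a b).ncard ≤ (4 ^ s - 1) ^ (r / s) * 4 ^ (r - r / s * s) := by
  set m := r / s with hm
  have hms : m * s ≤ r := Nat.div_mul_le_self r s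
  set p : Fin s → Fin 2 × Fin 2 := fun t => (a t, b t) with hp
  set Ψ : ↥(Fset r s a b) → {z : Fin r → Fin 2 × Fin 2 // ∀ k (hk : k < m),
        (fun t : Fin s => z ⟨k * s + t, block_lt hms hk t⟩) ≠ p} :=
    fun pq => ⟨fun i => (pq.1.1 i, pq.1.2 i), by
      intro k hk heq
      have hi : k * s + s ≤ r := by
        have h1 : (k + 1) * s ≤ m * s := Nat.mul_le_mul_right s hk
        rw [add_mul, one_mul] at h1; omega
      refine pq.2 (k * s) hi ⟨funext fun t => ?_, funext fun t => ?_⟩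
      · exact congrArg Prod.fst (congrFun heq t)
      · exact congrArg Prod.snd (congrFun heq t)⟩ with hΨ
  have hinj : Function.Injective Ψ := by
    intro z w h
    have h1 := Subtype.mk.injEq .. ▸ h
    apply Subtype.ext
    have e1 : z.1.1 = w.1.1 := funext fun i => congrArg Prod.fst (congrFun h1 i)
    have e2 : z.1.2 = w.1.2 := funext fun i => congrArg Prod.snd (congrFun h1 i)
    exact Prod.ext e1 e2
  have hbound := count_avoid (Fin 2 × Fin 2) s m r hs hms p
  simp only [Fintype.card_prod, Fintype.card_fin] at hbound
  calc (Fset r s a b).ncard = Nat.card ↥(Fset r s a b) := (Nat.card_coe_set_eq _).symm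
    _ ≤ Nat.card {z : Fin r → Fin 2 × Fin 2 // ∀ k (hk : k < m),
        (fun t : Fin s => z ⟨k * s + t, block_lt hms hk t⟩) ≠ p} :=
        Nat.card_le_card_of_injective Ψ hinj
    _ ≤ _ := by simpa using hbound

lemma ncard_biUnion_le' {α β : Type*} [Finite β] (t : Finset α) (f : α → Set β) :
    (⋃ a ∈ t, f a).ncard ≤ ∑ a ∈ t, (f a).ncard := by
  classical
  induction t using Finset.induction_on with
  | empty => simp
  | insert _ _ hnotmem ih =>
    rename_i a t
    rw [Finset.set_biUnion_insert, Finset.sum_insert hnotmem]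
    exact le_trans (Set.ncard_union_le _ _) (by gcongr)

lemma bad_card_le (s : ℕ) (hs : 0 < s) (r : ℕ) :
    Nat.card {p : (Fin r → Fin 2) × (Fin r → Fin 2) // ¬ sGood r s p.1 p.2} ≤
      2 * s * ((4 ^ s - 1) ^ (r / s) * 4 ^ (r - r / s * s)) := by
  classical
  set N := (4 ^ s - 1) ^ (r / s) * 4 ^ (r - r / s * s) with hN
  set B : Set ((Fin r → Fin 2) × (Fin r → Fin 2)) := {pq | ¬ sGood r s pq.1 pq.2} with hB
  have hsub : B ⊆ ⋃ h ∈ Finset.Icc 1 s,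
      (Fset r s (eVec s h) (fun _ => 0) ∪ Fset r s (fun _ => 0) (eVec s h)) := by
    intro pq hpq
    simp only [hB, Set.mem_setOf_eq, sGood, not_forall] at hpq
    obtain ⟨h, h1, h2, hne⟩ := hpq
    refine Set.mem_biUnion (Finset.mem_Icc.2 ⟨h1, h2⟩) ?_
    by_contra hcon
    rw [Set.mem_union, not_or] at hcon
    obtain ⟨hF, hG⟩ := hcon
    simp only [Fset, Set.mem_setOf_eq, not_forall, not_not] at hF hG
    obtain ⟨i, hi, hAi⟩ := hF
    obtain ⟨j, hj, hBj⟩ := hG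
    exact hne ⟨i, j, hi, hj, hAi.1, hBj.1, hAi.2, hBj.2⟩
  calc Nat.card {p : (Fin r → Fin 2) × (Fin r → Fin 2) // ¬ sGood r s p.1 p.2}
      = B.ncard := Nat.card_coe_set_eq B
    _ ≤ (⋃ h ∈ Finset.Icc 1 s,
          (Fset r s (eVec s h) (fun _ => 0) ∪ Fset r s (fun _ => 0) (eVec s h))).ncard :=
        Set.ncard_le_ncard hsub (Set.toFinite _)
    _ ≤ ∑ h ∈ Finset.Icc 1 s,
          ((Fset r s (eVec s h) (fun _ => 0) ∪ Fset r s (fun _ => 0) (eVec s h))).ncard :=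
        ncard_biUnion_le' _ _
    _ ≤ ∑ h ∈ Finset.Icc 1 s, (N + N) := by
        refine Finset.sum_le_sum fun h _ => ?_
        exact le_trans (Set.ncard_union_le _ _)
          (add_le_add (Fset_card r s hs _ _) (Fset_card r s hs _ _))
    _ = 2 * s * N := by simp [Nat.card_Icc]; ring

theorem proportion_of_s_bad_pairs_tendsto_zero (s : ℕ) (hs : 0 < s) :
    Filter.Tendsto
      (fun r : ℕ =>
        (Nat.card {p : (Fin r → Fin 2) × (Fin r → Fin 2) // ¬ sGood r s p.1 p.2} : ℝ) / 4 ^ r)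
      Filter.atTop (nhds 0) := by
  set q : ℝ := ((4 : ℝ) ^ s - 1) / 4 ^ s with hq
  have h4s : (1 : ℝ) ≤ 4 ^ s := one_le_pow₀ (by norm_num)
  have hq0 : 0 ≤ q := div_nonneg (by linarith) (by positivity)
  have hq1 : q < 1 := by
    rw [hq, div_lt_one (by positivity)]; linarith
  have key : ∀ r : ℕ,
      (Nat.card {p : (Fin r → Fin 2) × (Fin r → Fin 2) // ¬ sGood r s p.1 p.2} : ℝ) / 4 ^ r ≤
        2 * s * q ^ (r / s) := by
    intro r
    set m := r / s with hm
    have hms : m * s ≤ r := Nat.div_mul_le_self r s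
    have hnat := bad_card_le s hs r
    have hcast : ((2 * s * ((4 ^ s - 1) ^ m * 4 ^ (r - m * s)) : ℕ) : ℝ) =
        2 * s * (((4 : ℝ) ^ s - 1) ^ m * 4 ^ (r - m * s)) := by
      push_cast [Nat.cast_sub (Nat.one_le_pow s 4 (by norm_num))]
      ring
    have h1 : (Nat.card {p : (Fin r → Fin 2) × (Fin r → Fin 2) // ¬ sGood r s p.1 p.2} : ℝ) ≤
        2 * s * (((4 : ℝ) ^ s - 1) ^ m * 4 ^ (r - m * s)) := by
      rw [← hcast]; exact_mod_cast hnat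
    rw [div_le_iff₀ (by positivity)]
    have hsplit : (4 : ℝ) ^ r = 4 ^ (m * s) * 4 ^ (r - m * s) := by
      rw [← pow_add]; congr 1; omega
    have hqm : q ^ m * 4 ^ (m * s) = ((4 : ℝ) ^ s - 1) ^ m := by
      rw [hq, div_pow, ← pow_mul, mul_comm s m, div_mul_cancel₀]
      positivity
    calc (Nat.card {p : (Fin r → Fin 2) × (Fin r → Fin 2) // ¬ sGood r s p.1 p.2} : ℝ)
        ≤ 2 * s * (((4 : ℝ) ^ s - 1) ^ m * 4 ^ (r - m * s)) := h1
      _ = 2 * s * q ^ m * 4 ^ r := by rw [hsplit, ← hqm]; ring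
  have h2 : Filter.Tendsto (fun r : ℕ => r / s) Filter.atTop Filter.atTop := by
    apply Filter.tendsto_atTop_atTop.2
    intro b
    exact ⟨b * s, fun a ha => (Nat.le_div_iff_mul_le hs).2 ha⟩
  have h3 := (tendsto_pow_atTop_nhds_zero_of_lt_one hq0 hq1).comp h2
  have h4 : Filter.Tendsto (fun r : ℕ => 2 * (s : ℝ) * q ^ (r / s)) Filter.atTop (nhds 0) := by
    simpa using h3.const_mul (2 * (s : ℝ))
  exact squeeze_zero (fun r => by positivity) key h4
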